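/- Zero-one law for strongly connected systems: let L be a strongly connected LTS and φ ∈ L⁺(F_p^∞), and let μ_L be the fair-coin measure of L. Then either there exists k ∈ ℕ with μ_L({ρ : (ρ,k) ⊨ φ}) = 1, or for every k ∈ ℕ, μ_L({ρ : (ρ,k) ⊨ φ}) = 0. -/

import Mathlib

open scoped Classical
open MeasureTheory

/-- A labelled transition system: a finite set of states `S`, an initial state,
a transition relation in which every state has at least one successor, and a
labeling of states by sets of atomic propositions. -/
structure LTS (S AP : Type) where
  init : S
  T : S → S → Prop
  lbl : S → Set AP
  succ_nonempty : ∀ s : S, ∃ t : S, T s t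

variable {S AP : Type}

/-- A run of an LTS: an infinite sequence of states following the transitions. -/
def IsRun (L : LTS S AP) (ρ : ℕ → S) : Prop := ∀ i : ℕ, L.T (ρ i) (ρ (i + 1))

/-- The shifted run `ρ[i..]`. -/
def shift (ρ : ℕ → S) (i : ℕ) : ℕ → S := fun n => ρ (n + i)

/-- Formulas of the prompt Muller fragment `L(F_p^∞)`:
`φ ::= α | ¬α | φ ∨ φ | φ ∧ φ | F_p^∞ φ`. -/
inductive PM (AP : Type) : Type where
  | pos : AP → PM AP
  | neg : AP → PM AP
  | or : PM AP → PM AP → PM AP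
  | and : PM AP → PM AP → PM AP
  | finf : PM AP → PM AP

/-- Satisfaction `(ρ, k) ⊨ φ` of a prompt Muller formula by a run at bound `k`. -/
def Sat (L : LTS S AP) : PM AP → (ℕ → S) → ℕ → Prop
  | .pos a, ρ, _ => a ∈ L.lbl (ρ 0)
  | .neg a, ρ, _ => a ∉ L.lbl (ρ 0)
  | .or φ ψ, ρ, k => Sat L φ ρ k ∨ Sat L ψ ρ k
  | .and φ ψ, ρ, k => Sat L φ ρ k ∧ Sat L ψ ρ k
  | .finf φ, ρ, k => ∀ i : ℕ, ∃ j ≤ k, Sat L φ (shift ρ (i + j)) k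

/-- The positive fragment `L⁺(F_p^∞)`: the smallest set of formulas containing
`F_p^∞ φ` for every formula `φ` and closed under `∨`, `∧` and `F_p^∞`. -/
inductive Positive {AP : Type} : PM AP → Prop where
  | finf (φ : PM AP) : Positive (.finf φ)
  | or {φ ψ : PM AP} : Positive φ → Positive ψ → Positive (.or φ ψ)
  | and {φ ψ : PM AP} : Positive φ → Positive ψ → Positive (.and φ ψ)

/-- Reachability along transitions. -/
def Reachable (L : LTS S AP) : S → S → Prop := Relation.ReflTransGen L.T

/-- A strongly connected component: an equivalence class of mutual reachability. -/
def IsSCC (L : LTS S AP) (C : Set S) : Prop :=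
  ∃ s : S, C = {t : S | Reachable L s t ∧ Reachable L t s}

/-- A bottom strongly connected component: an SCC closed under transitions. -/
def IsBSCC (L : LTS S AP) (C : Set S) : Prop :=
  IsSCC L C ∧ ∀ s ∈ C, ∀ t : S, L.T s t → t ∈ C

/-- The probability of one fair-coin step from `s` to `t`: the successor is chosen
uniformly at random among the successors of `s`. -/
noncomputable def stepProb (L : LTS S AP) (s t : S) : ENNReal :=
  if L.T s t then ((Nat.card {u : S // L.T s u} : ENNReal))⁻¹ else 0

/-- The product of the step probabilities along a finite sequence of states. -/
noncomputable def chainProb (L : LTS S AP) : List S → ENNReal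
  | [] => 1
  | [_] => 1
  | s :: t :: rest => stepProb L s t * chainProb L (t :: rest)

/-- The cylinder `Cyl w` of infinite sequences extending the finite word `w`. -/
def Cyl (w : List S) : Set (ℕ → S) := {ρ | ∀ i : Fin w.length, ρ i = w.get i}

/-- The fair-coin probability of the cylinder of a finite word: `1` on the initial
state, then the product of the uniform step probabilities. -/
noncomputable def pathProb (L : LTS S AP) (w : List S) : ENNReal :=
  (if w.head? = some L.init then 1 else 0) * chainProb L w

/-- `μ` is the fair-coin measure of `L`: the trajectory (Ionescu–Tulcea) law of the
Markov chain started at `L.init` that moves from each state to a uniformly chosen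
successor; it is the unique probability measure on `S^ℕ` (product σ-algebra, `S`
discrete) giving every nonempty cylinder its path probability. -/
def IsFairMeasure [MeasurableSpace S] (L : LTS S AP) (μ : Measure (ℕ → S)) : Prop :=
  IsProbabilityMeasure μ ∧ ∀ w : List S, w ≠ [] → μ (Cyl w) = pathProb L w

/-! ### Auxiliary development -/


/-- A *generic* run: a run in which every finite prefix of every run of `L`
occurs at arbitrarily late positions. -/
def Gen (L : LTS S AP) (ρ : ℕ → S) : Prop :=
  IsRun L ρ ∧ ∀ σ : ℕ → S, IsRun L σ → ∀ n N : ℕ, ∃ p, N ≤ p ∧ ∀ t ≤ n, ρ (p + t) = σ t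

lemma Gen.shift' {L : LTS S AP} {ρ : ℕ → S} (h : Gen L ρ) (m : ℕ) : Gen L (shift ρ m) := by
  constructor
  · intro i
    have := h.1 (i + m)
    simpa [shift, Nat.add_right_comm] using this
  · intro σ hσ n N
    obtain ⟨p, hp, hmatch⟩ := h.2 σ hσ n (N + m)
    refine ⟨p - m, by omega, fun t ht => ?_⟩
    have : p - m + t + m = p + t := by omega
    rw [shift, this, hmatch t ht]

lemma finf_step {L : LTS S AP} {k : ℕ} (χ : PM AP) (c : ℕ)
    (ih : ∀ ρ σ, Gen L ρ → Gen L σ → (∀ t ≤ c, ρ t = σ t) → Sat L χ ρ k → Sat L χ σ k) :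
    ∀ ρ σ, Gen L ρ → Gen L σ → Sat L (.finf χ) ρ k → Sat L (.finf χ) σ k := by
  intro ρ σ hρ hσ hsat i
  obtain ⟨p, -, hmatch⟩ := hρ.2 (shift σ i) (hσ.shift' i).1 (k + c) 0
  obtain ⟨j, hj, hχ⟩ := hsat p
  refine ⟨j, hj, ih _ _ (hρ.shift' (p + j)) (hσ.shift' (i + j)) (fun t ht => ?_) hχ⟩
  have h1 : t + (p + j) = p + (j + t) := by omega
  have h2 : j + t + i = t + (i + j) := by omega
  rw [shift, h1, hmatch (j + t) (by omega), shift, h2]; rfl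

lemma sat_agree (L : LTS S AP) (k : ℕ) :
    ∀ ψ : PM AP, ∃ c : ℕ, ∀ ρ σ, Gen L ρ → Gen L σ →
      (∀ t ≤ c, ρ t = σ t) → Sat L ψ ρ k → Sat L ψ σ k := by
  intro ψ
  induction ψ with
  | pos a => exact ⟨0, fun ρ σ _ _ hag h => by
      simpa [Sat, ← hag 0 le_rfl] using h⟩
  | neg a => exact ⟨0, fun ρ σ _ _ hag h => by
      simpa [Sat, ← hag 0 le_rfl] using h⟩
  | or φ ψ ih1 ih2 =>
      obtain ⟨c1, h1⟩ := ih1; obtain ⟨c2, h2⟩ := ih2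
      refine ⟨max c1 c2, fun ρ σ hρ hσ hag h => ?_⟩
      rcases h with h | h
      · exact Or.inl (h1 ρ σ hρ hσ (fun t ht => hag t (le_trans ht (le_max_left _ _))) h)
      · exact Or.inr (h2 ρ σ hρ hσ (fun t ht => hag t (le_trans ht (le_max_right _ _))) h)
  | and φ ψ ih1 ih2 =>
      obtain ⟨c1, h1⟩ := ih1; obtain ⟨c2, h2⟩ := ih2
      refine ⟨max c1 c2, fun ρ σ hρ hσ hag h => ?_⟩
      exact ⟨h1 ρ σ hρ hσ (fun t ht => hag t (le_trans ht (le_max_left _ _))) h.1,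
             h2 ρ σ hρ hσ (fun t ht => hag t (le_trans ht (le_max_right _ _))) h.2⟩
  | finf χ ih =>
      obtain ⟨c, hc⟩ := ih
      exact ⟨0, fun ρ σ hρ hσ _ h => finf_step χ c hc ρ σ hρ hσ h⟩

lemma sat_pos {L : LTS S AP} {k : ℕ} {φ : PM AP} (hφ : Positive φ) :
    ∀ ρ σ, Gen L ρ → Gen L σ → Sat L φ ρ k → Sat L φ σ k := by
  induction hφ with
  | finf ψ =>
      obtain ⟨c, hc⟩ := sat_agree L k ψ
      exact finf_step ψ c hc
  | or hφ hψ ih1 ih2 =>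
      intro ρ σ hρ hσ h
      rcases h with h | h
      · exact Or.inl (ih1 ρ σ hρ hσ h)
      · exact Or.inr (ih2 ρ σ hρ hσ h)
  | and hφ hψ ih1 ih2 =>
      intro ρ σ hρ hσ h
      exact ⟨ih1 ρ σ hρ hσ h.1, ih2 ρ σ hρ hσ h.2⟩

section
variable [Fintype S] (L : LTS S AP)

lemma sum_step (s : S) : ∑ t : S, stepProb L s t = 1 := by
  classical
  have hcard : (Nat.card {u : S // L.T s u} : ℕ) = (Finset.univ.filter (fun t => L.T s t)).card := by
    rw [Nat.card_eq_fintype_card, Fintype.card_subtype]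
  have hne : (Finset.univ.filter (fun t => L.T s t)).Nonempty := by
    obtain ⟨t, ht⟩ := L.succ_nonempty s
    exact ⟨t, by simp [ht]⟩
  rw [show (∑ t : S, stepProb L s t)
      = ∑ t ∈ Finset.univ.filter (fun t => L.T s t),
          ((Nat.card {u : S // L.T s u} : ENNReal))⁻¹ by
    rw [Finset.sum_filter]; apply Finset.sum_congr rfl; intro t _; simp [stepProb]]
  rw [Finset.sum_const, nsmul_eq_mul, hcard]
  rw [ENNReal.mul_inv_cancel]
  · exact_mod_cast Nat.cast_ne_zero.2 (Finset.card_ne_zero_of_mem hne.choose_spec)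
  · simp

lemma chainProb_cons_cons (s t : S) (l : List S) :
    chainProb L (s :: t :: l) = stepProb L s t * chainProb L (t :: l) := rfl

lemma sum_chain : ∀ (m : ℕ) (s : S), ∑ y : Fin m → S, chainProb L (s :: List.ofFn y) = 1 := by
  intro m
  induction m with
  | zero => intro s; simp [chainProb]
  | succ m ih =>
      intro s
      set e : (S × (Fin m → S)) ≃ (Fin (m + 1) → S) := Fin.consEquiv (fun _ => S) with he0
      rw [← Equiv.sum_comp e (fun y => chainProb L (s :: List.ofFn y))]
      rw [Fintype.sum_prod_type]
      have key : ∀ (t : S) (z : Fin m → S),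
          chainProb L (s :: List.ofFn (e (t, z))) = stepProb L s t * chainProb L (t :: List.ofFn z) := by
        intro t z
        have he : e (t, z) = Fin.cons t z := rfl
        have : List.ofFn (e (t, z)) = t :: List.ofFn z := by
          rw [he, List.ofFn_succ]; simp
        rw [this, chainProb_cons_cons]
      simp_rw [key, ← Finset.mul_sum, ih, mul_one]
      exact sum_step L s

lemma chainProb_ofFn : ∀ (m : ℕ) (x : Fin (m + 1) → S),
    chainProb L (List.ofFn x) = ∏ i : Fin m, stepProb L (x i.castSucc) (x i.succ) := by
  intro m
  induction m with
  | zero => intro x; simp [List.ofFn_succ, chainProb]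
  | succ m ih =>
      intro x
      have h1 : List.ofFn x = x 0 :: List.ofFn (fun i : Fin (m + 1) => x i.succ) := by
        rw [List.ofFn_succ]
      have h2 : List.ofFn (fun i : Fin (m + 1) => x i.succ)
          = x 1 :: List.ofFn (fun i : Fin m => x i.succ.succ) := by
        rw [List.ofFn_succ]; simp
      rw [h1, h2, chainProb_cons_cons, ← h2, ih]
      rw [Fin.prod_univ_succ]
      simp [Fin.succ_castSucc, -Fin.castSucc_succ]

lemma chainProb_append : ∀ (l₁ : List S) (s : S) (l₂ : List S),
    chainProb L (l₁ ++ s :: l₂) = chainProb L (l₁ ++ [s]) * chainProb L (s :: l₂) := by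
  intro l₁
  induction l₁ with
  | nil => intro s l₂; simp [chainProb]
  | cons x l₁ ih =>
      intro s l₂
      cases l₁ with
      | nil => simp [chainProb_cons_cons, chainProb]
      | cons y l₁' =>
          have := ih (s := s) (l₂ := l₂)
          simp only [List.cons_append] at *
          rw [chainProb_cons_cons, chainProb_cons_cons, this, mul_assoc]

end

section
variable [Fintype S] (L : LTS S AP)

lemma Cyl_ofFn {m : ℕ} (x : Fin m → S) :
    Cyl (List.ofFn x) = {ρ : ℕ → S | ∀ i : Fin m, ρ i = x i} := by
  ext ρ
  constructor
  · intro h i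
    have hi : (i : ℕ) < (List.ofFn x).length := by simp [i.2]
    have := h ⟨i, hi⟩
    simpa [List.get_ofFn] using this
  · intro h i
    have hi : (i : ℕ) < m := by simpa using i.2
    have := h ⟨i, hi⟩
    simp only [List.get_ofFn]
    exact this

lemma pathProb_ofFn_append {q M : ℕ} (x₁ : Fin (q + 1) → S) (x₂ : Fin M → S) :
    pathProb L (List.ofFn x₁ ++ List.ofFn x₂)
      = pathProb L (List.ofFn x₁) * chainProb L (x₁ (Fin.last q) :: List.ofFn x₂) := by
  have h1 : List.ofFn x₁ = (List.ofFn fun i : Fin q => x₁ i.castSucc) ++ [x₁ (Fin.last q)] := by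
    rw [List.ofFn_succ']
    simp [List.concat_eq_append]
  rw [pathProb, pathProb]
  cases M with
  | zero =>
      simp [chainProb, List.ofFn_zero]
  | succ M =>
      have h2 : List.ofFn x₁ ++ List.ofFn x₂
          = ((List.ofFn fun i : Fin q => x₁ i.castSucc) ++
              (x₁ (Fin.last q) :: List.ofFn x₂)) := by
        rw [h1]; simp
      rw [h2, chainProb_append]
      have h3 : (if ((List.ofFn fun i : Fin q => x₁ i.castSucc) ++
          (x₁ (Fin.last q) :: List.ofFn x₂)).head? = some L.init then (1:ENNReal) else 0)
          = (if (List.ofFn x₁).head? = some L.init then 1 else 0) := by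
        congr 1
        rw [h1]
        cases q with
        | zero => simp
        | succ q => simp [List.ofFn_succ]
      rw [h3, ← h1]
      ring

lemma sum_pathProb (q : ℕ) : ∑ x : Fin (q + 1) → S, pathProb L (List.ofFn x) = 1 := by
  classical
  set e : (S × (Fin q → S)) ≃ (Fin (q + 1) → S) := Fin.consEquiv (fun _ => S) with he0
  rw [← Equiv.sum_comp e (fun y => pathProb L (List.ofFn y))]
  rw [Fintype.sum_prod_type]
  have key : ∀ (t : S) (z : Fin q → S),
      pathProb L (List.ofFn (e (t, z)))
        = (if t = L.init then 1 else 0) * chainProb L (t :: List.ofFn z) := by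
    intro t z
    have he : e (t, z) = Fin.cons t z := rfl
    have h : List.ofFn (e (t, z)) = t :: List.ofFn z := by
      rw [he, List.ofFn_succ]; simp
    rw [h, pathProb]
    simp
  simp_rw [key]
  rw [Finset.sum_eq_single L.init]
  · simp [sum_chain L q L.init]
  · intro b _ hb; simp [hb]
  · simp

lemma step_ge (s t : S) (h : L.T s t) :
    ((Fintype.card S : ENNReal))⁻¹ ≤ stepProb L s t := by
  rw [stepProb, if_pos h]
  apply ENNReal.inv_le_inv.2
  have : Nat.card {u : S // L.T s u} ≤ Fintype.card S := by
    rw [Nat.card_eq_fintype_card]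
    exact Fintype.card_subtype_le _
  exact_mod_cast this

lemma chain_run_ge (τ : ℕ → S) (hτ : IsRun L τ) : ∀ (m : ℕ),
    ((Fintype.card S : ENNReal))⁻¹ ^ m ≤ chainProb L (List.ofFn fun i : Fin (m + 1) => τ i) := by
  intro m
  induction m generalizing τ hτ with
  | zero => simp [List.ofFn_succ, chainProb]
  | succ m ih =>
      have hrun : IsRun L (shift τ 1) := by
        intro i
        have := hτ (i + 1)
        simpa [shift, Nat.add_right_comm] using this
      have h1 : (List.ofFn fun i : Fin (m + 2) => τ i)
          = τ 0 :: List.ofFn (fun i : Fin (m + 1) => shift τ 1 i) := by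
        rw [List.ofFn_succ]
        simp [shift, Nat.add_comm]
      have h2 : List.ofFn (fun i : Fin (m + 1) => shift τ 1 i)
          = τ 1 :: List.ofFn (fun i : Fin m => shift τ 1 i.succ) := by
        rw [List.ofFn_succ]
        simp [shift]
      have hc : chainProb L (List.ofFn fun i : Fin (m + 2) => τ i)
          = stepProb L (τ 0) (τ 1) * chainProb L (List.ofFn (fun i : Fin (m + 1) => shift τ 1 i)) := by
        rw [h1, h2, chainProb_cons_cons, ← h2]
      rw [hc, pow_succ, mul_comm]
      exact mul_le_mul' (step_ge L _ _ (hτ 0)) (ih (shift τ 1) hrun)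

end

noncomputable def runFrom (L : LTS S AP) (s : S) : ℕ → S
  | 0 => s
  | k + 1 => Classical.choose (L.succ_nonempty (runFrom L s k))

lemma runFrom_isRun (L : LTS S AP) (s : S) : IsRun L (runFrom L s) := fun i =>
  Classical.choose_spec (L.succ_nonempty (runFrom L s i))

lemma reach_fun {L : LTS S AP} {s t : S} (h : Reachable L s t) :
    ∃ (g : ℕ → S) (d : ℕ), g 0 = s ∧ g d = t ∧ ∀ i < d, L.T (g i) (g (i + 1)) := by
  induction h with
  | refl => exact ⟨fun _ => s, 0, rfl, rfl, by omega⟩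
  | @tail b c h1 h2 ih =>
      obtain ⟨g, d, hg0, hgd, hstep⟩ := ih
      refine ⟨fun i => if i ≤ d then g i else c, d + 1, by simp [hg0],
        by simp only []; rw [if_neg (by omega)], ?_⟩
      intro i hi
      simp only []
      by_cases hid : i + 1 ≤ d
      · rw [if_pos (by omega : i ≤ d), if_pos hid]
        exact hstep i (by omega)
      · have heq : i = d := by omega
        subst heq
        rw [if_pos le_rfl, if_neg hid, hgd]
        exact h2

lemma exists_run_through (L : LTS S AP) (hsc : ∀ s t : S, Reachable L s t)
    (v : ℕ → S) (n : ℕ) (hv : ∀ i < n, L.T (v i) (v (i + 1))) (s : S) :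
    ∃ (τ : ℕ → S) (d : ℕ), IsRun L τ ∧ τ 0 = s ∧ ∀ t ≤ n, τ (d + t) = v t := by
  obtain ⟨g, d, hg0, hgd, hstep⟩ := reach_fun (hsc s (v 0))
  refine ⟨fun i => if i < d then g i
    else if i - d ≤ n then v (i - d) else runFrom L (v n) (i - d - n), d, ?_, ?_, ?_⟩
  · intro i
    by_cases h1 : i + 1 < d
    · simp only [if_pos (by omega : i < d), if_pos h1]
      exact hstep i (by omega)
    · by_cases h2 : i + 1 = d
      · simp only [if_pos (by omega : i < d), if_neg (by omega : ¬ i + 1 < d),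
          if_pos (by omega : i + 1 - d ≤ n)]
        have e : v (i + 1 - d) = g (i + 1) := by
          rw [h2, hgd, Nat.sub_self]
        rw [e]
        exact hstep i (by omega)
      · have hid : ¬ i < d := by omega
        have hid2 : ¬ i + 1 < d := by omega
        by_cases h3 : i - d < n
        · simp only [if_neg hid, if_neg hid2, if_pos (by omega : i - d ≤ n),
            if_pos (by omega : i + 1 - d ≤ n)]
          have : i + 1 - d = (i - d) + 1 := by omega
          rw [this]
          exact hv _ h3
        · by_cases h4 : i - d = n
          · simp only [if_neg hid, if_neg hid2, if_pos (by omega : i - d ≤ n),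
              if_neg (by omega : ¬ i + 1 - d ≤ n)]
            have e1 : i + 1 - d - n = 1 := by omega
            have e2 : v (i - d) = runFrom L (v n) 0 := by rw [h4]; rfl
            rw [e1, e2]
            exact runFrom_isRun L (v n) 0
          · simp only [if_neg hid, if_neg hid2, if_neg (by omega : ¬ i - d ≤ n),
              if_neg (by omega : ¬ i + 1 - d ≤ n)]
            have e1 : i + 1 - d - n = (i - d - n) + 1 := by omega
            rw [e1]
            exact runFrom_isRun L (v n) _
  · by_cases hd : 0 < d
    · simp [hd, hg0]
    · have hd0 : d = 0 := by omega
      subst hd0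
      simp only []
      rw [if_neg (by omega : ¬ (0:ℕ) < 0), if_pos (by omega : (0:ℕ) - 0 ≤ n)]
      show v (0 - 0) = s
      rw [show (0:ℕ) - 0 = 0 from rfl, ← hgd]
      exact hg0
  · intro t ht
    simp only [if_neg (by omega : ¬ d + t < d), if_pos (by omega : d + t - d ≤ n)]
    congr 1
    omega

lemma append_lt' {q M : ℕ} (a : Fin q → S) (b : Fin M → S) (i : ℕ) (h : i < q)
    (h2 : i < q + M) : Fin.append a b ⟨i, h2⟩ = a ⟨i, h⟩ := by
  have : (⟨i, h2⟩ : Fin (q + M)) = Fin.castAdd M ⟨i, h⟩ := rfl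
  rw [this, Fin.append_left]

lemma append_ge' {q M : ℕ} (a : Fin q → S) (b : Fin M → S) (j : ℕ) (h : j < M)
    (h2 : q + j < q + M) : Fin.append a b ⟨q + j, h2⟩ = b ⟨j, h⟩ := by
  have : (⟨q + j, h2⟩ : Fin (q + M)) = Fin.natAdd q ⟨j, h⟩ := rfl
  rw [this, Fin.append_right]

lemma append_val {q M : ℕ} (a : Fin q → S) (b : Fin M → S) (i : ℕ) (h : i < q + M) :
    Fin.append a b ⟨i, h⟩ = if hi : i < q then a ⟨i, hi⟩ else b ⟨i - q, by omega⟩ := by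
  split
  · exact append_lt' a b i (by assumption) h
  · have h2 : (⟨i, h⟩ : Fin (q + M)) = ⟨q + (i - q), by omega⟩ := Fin.ext (by simp; omega)
    rw [h2, append_ge' a b (i - q) (by omega)]

/-- The key property that a prefix avoids the pattern `v` in the window `[N, q-n-1]`. -/
def noM (v : ℕ → S) (n N q : ℕ) (x : Fin q → S) : Prop :=
  ∀ p, N ≤ p → ∀ hq : p + n + 1 ≤ q, ∃ t, ∃ ht : t ≤ n, x ⟨p + t, by omega⟩ ≠ v t

section Avoid
variable [Fintype S] [MeasurableSpace S] (L : LTS S AP)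
  (μ : Measure (ℕ → S)) (v : ℕ → S) (n N : ℕ)

noncomputable def avF : ℕ → ENNReal := fun q =>
  ∑ x ∈ Finset.univ.filter (noM v n N q), pathProb L (List.ofFn x)

lemma avoid_null (hμ : IsFairMeasure L μ) (hsc : ∀ s t : S, Reachable L s t)
    (hv : ∀ i < n, L.T (v i) (v (i + 1))) :
    μ {ρ : ℕ → S | ∀ p, N ≤ p → ∃ t ≤ n, ρ (p + t) ≠ v t} = 0 := by
  classical
  -- good continuations
  have hex : ∀ s : S, ∃ (τ : ℕ → S) (d : ℕ), IsRun L τ ∧ τ 0 = s ∧ ∀ t ≤ n, τ (d + t) = v t :=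
    exists_run_through L hsc v n hv
  choose τ dd hτrun hτ0 hτv using hex
  set D := Finset.univ.sup dd with hD
  set M := D + n + 1 with hM
  set δ : ENNReal := ((Fintype.card S : ENNReal))⁻¹ with hδ
  set ε : ENNReal := δ ^ M with hε
  have hε0 : ε ≠ 0 := by
    apply pow_ne_zero
    rw [hδ]
    exact ENNReal.inv_ne_zero.2 (ENNReal.natCast_ne_top _)
  -- the good continuation from state s
  set good : S → (Fin M → S) := fun s => fun j => τ s (j + 1) with hgooddef
  have hgood : ∀ s : S, ε ≤ chainProb L (s :: List.ofFn (good s)) := by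
    intro s
    have h1 : (s :: List.ofFn (good s)) = List.ofFn (fun i : Fin (M + 1) => τ s i) := by
      rw [List.ofFn_succ]
      simp [hτ0, good]
    rw [h1, hε, hδ]
    exact chain_run_ge L (τ s) (hτrun s) M
  -- (C1)
  have hC1 : ∀ q : ℕ, μ {ρ : ℕ → S | ∀ p, N ≤ p → ∃ t ≤ n, ρ (p + t) ≠ v t}
      ≤ avF L v n N (q + 1) := by
    intro q
    have hsub : {ρ : ℕ → S | ∀ p, N ≤ p → ∃ t ≤ n, ρ (p + t) ≠ v t}
        ⊆ ⋃ x ∈ Finset.univ.filter (noM v n N (q + 1)), Cyl (List.ofFn x) := by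
      intro ρ hρ
      have hx1 : (fun i : Fin (q + 1) => ρ i) ∈ Finset.univ.filter (noM v n N (q + 1)) := by
        simp only [Finset.mem_filter, Finset.mem_univ, true_and]
        intro p hp hq
        obtain ⟨t, ht, hne⟩ := hρ p hp
        exact ⟨t, ht, hne⟩
      have hx2 : ρ ∈ Cyl (List.ofFn (fun i : Fin (q + 1) => ρ i)) := by
        rw [Cyl_ofFn]
        intro i
        rfl
      exact Set.mem_biUnion hx1 hx2
    refine le_trans (measure_mono hsub) ?_
    refine le_trans (measure_biUnion_finset_le _ _) ?_
    apply Finset.sum_le_sum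
    intro x hx
    rw [hμ.2 (List.ofFn x) (by
      intro hnil
      simpa using congrArg List.length hnil)]
  -- (C0)
  have hC0 : avF L v n N (N + 1) ≤ 1 := by
    rw [avF]
    refine le_trans (Finset.sum_le_sum_of_subset (Finset.filter_subset _ _)) ?_
    rw [sum_pathProb L N]
  -- ε is finite
  have hStop : ε ≠ ⊤ := by
    have : Nonempty S := ⟨L.init⟩
    apply ENNReal.pow_ne_top
    rw [hδ]
    exact ENNReal.inv_ne_top.2 (by exact_mod_cast Nat.cast_ne_zero.2 Fintype.card_ne_zero)
  -- implication lemmas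
  have himp1 : ∀ (q : ℕ) (a : Fin (q + 1) → S) (b : Fin M → S),
      noM v n N (q + 1 + M) (Fin.append a b) → noM v n N (q + 1) a := by
    intro q a b hfull p hp hq2
    obtain ⟨t, ht, hne⟩ := hfull p hp (by omega)
    refine ⟨t, ht, ?_⟩
    rw [append_val, dif_pos (by omega : p + t < q + 1)] at hne
    exact hne
  have himp2 : ∀ (q : ℕ), N ≤ q → ∀ (a : Fin (q + 1) → S) (b : Fin M → S),
      noM v n N (q + 1 + M) (Fin.append a b) → b ≠ good (a (Fin.last q)) := by
    intro q hq a b hfull hb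
    set s := a (Fin.last q) with hs
    have hdD : dd s ≤ D := Finset.le_sup (Finset.mem_univ s)
    obtain ⟨t, ht, hne⟩ := hfull (q + dd s) (by omega) (by omega)
    apply hne
    rw [append_val]
    rcases Nat.eq_zero_or_pos (dd s + t) with h0 | hpos
    · rw [dif_pos (by omega : q + dd s + t < q + 1)]
      have he : (⟨q + dd s + t, by omega⟩ : Fin (q + 1)) = Fin.last q :=
        Fin.ext (by simp [Fin.last]; omega)
      rw [he, ← hs, ← hτv s t ht, show dd s + t = 0 from h0, hτ0]
    · rw [dif_neg (by omega : ¬ q + dd s + t < q + 1), hb]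
      show τ s ((⟨q + dd s + t - (q + 1), by omega⟩ : Fin M) + 1) = v t
      rw [show ((⟨q + dd s + t - (q + 1), by omega⟩ : Fin M) : ℕ) + 1 = dd s + t from by
        simp; omega]
      exact hτv s t ht
  -- (C2)
  have hC2 : ∀ q : ℕ, N ≤ q →
      avF L v n N (q + 1 + M) ≤ (1 - ε) * avF L v n N (q + 1) := by
    intro q hq
    classical
    rw [avF, Finset.sum_filter,
      ← Equiv.sum_comp (Fin.appendEquiv (α := S) (q + 1) M)
        (fun x => if noM v n N (q + 1 + M) x then pathProb L (List.ofFn x) else 0),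
      Fintype.sum_prod_type]
    have happ : ∀ (p : (Fin (q + 1) → S) × (Fin M → S)),
        Fin.appendEquiv (α := S) (q + 1) M p = Fin.append p.1 p.2 := fun p => rfl
    have hinner : ∀ a : Fin (q + 1) → S,
        (∑ b : Fin M → S, if noM v n N (q + 1 + M)
            (Fin.appendEquiv (α := S) (q + 1) M (a, b))
          then pathProb L (List.ofFn (Fin.appendEquiv (α := S) (q + 1) M (a, b))) else 0)
        ≤ (1 - ε) * (if noM v n N (q + 1) a then pathProb L (List.ofFn a) else 0) := by
      intro a
      by_cases hna : noM v n N (q + 1) a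
      · rw [if_pos hna]
        set s := a (Fin.last q) with hs
        have hb1 : ∀ b : Fin M → S,
            (if noM v n N (q + 1 + M) (Fin.appendEquiv (α := S) (q + 1) M (a, b))
              then pathProb L (List.ofFn (Fin.appendEquiv (α := S) (q + 1) M (a, b))) else 0)
            ≤ (if b ≠ good s then
                pathProb L (List.ofFn a) * chainProb L (s :: List.ofFn b) else 0) := by
          intro b
          by_cases hfull : noM v n N (q + 1 + M) (Fin.append a b)
          · rw [happ, if_pos hfull, if_pos (himp2 q hq a b hfull)]
            have : List.ofFn (Fin.append a b) = List.ofFn a ++ List.ofFn b := by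
              rw [List.ofFn_add]
              congr 1
              · exact congrArg _ (funext fun i => Fin.append_left a b i)
              · exact congrArg _ (funext fun i => Fin.append_right a b i)
            rw [this, pathProb_ofFn_append]
          · rw [happ, if_neg hfull]
            exact zero_le
        refine le_trans (Finset.sum_le_sum fun b _ => hb1 b) ?_
        have hpull : ∀ b : Fin M → S,
            (if b ≠ good s then pathProb L (List.ofFn a) * chainProb L (s :: List.ofFn b) else 0)
            = pathProb L (List.ofFn a) * (if b ≠ good s then chainProb L (s :: List.ofFn b) else 0) := by
          intro b
          by_cases hbg : b ≠ good s <;> simp [hbg]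
        simp_rw [hpull]
        rw [← Finset.mul_sum]
        have herase : (∑ b : Fin M → S, if b ≠ good s then chainProb L (s :: List.ofFn b) else 0)
            = ∑ b ∈ Finset.univ.erase (good s), chainProb L (s :: List.ofFn b) := by
          rw [← Finset.filter_ne' Finset.univ (good s), Finset.sum_filter]
        have hsum1 : chainProb L (s :: List.ofFn (good s))
            + ∑ b ∈ Finset.univ.erase (good s), chainProb L (s :: List.ofFn b) = 1 := by
          rw [Finset.add_sum_erase Finset.univ
            (fun b : Fin M → S => chainProb L (s :: List.ofFn b)) (Finset.mem_univ (good s))]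
          exact sum_chain L M s
        have hle : (∑ b ∈ Finset.univ.erase (good s), chainProb L (s :: List.ofFn b)) ≤ 1 - ε := by
          apply ENNReal.le_sub_of_add_le_left hStop
          calc ε + ∑ b ∈ Finset.univ.erase (good s), chainProb L (s :: List.ofFn b)
              ≤ chainProb L (s :: List.ofFn (good s))
                + ∑ b ∈ Finset.univ.erase (good s), chainProb L (s :: List.ofFn b) :=
                add_le_add (hgood s) le_rfl
            _ = 1 := hsum1
        rw [herase, mul_comm (1 - ε) _]
        exact mul_le_mul_right hle _
      · have hzero : ∀ b : Fin M → S,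
            (if noM v n N (q + 1 + M) (Fin.appendEquiv (α := S) (q + 1) M (a, b))
              then pathProb L (List.ofFn (Fin.appendEquiv (α := S) (q + 1) M (a, b))) else 0) = 0 := by
          intro b
          rw [happ, if_neg]
          intro hfull
          exact hna (himp1 q a b hfull)
        rw [Finset.sum_eq_zero fun b _ => hzero b]
        exact zero_le
    refine le_trans (Finset.sum_le_sum fun a _ => hinner a) ?_
    rw [← Finset.mul_sum, avF, Finset.sum_filter]
  -- iteration
  have hiter : ∀ r : ℕ, avF L v n N (N + 1 + r * M) ≤ (1 - ε) ^ r := by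
    intro r
    induction r with
    | zero => simpa using hC0
    | succ r ih =>
        have he1 : N + 1 + (r + 1) * M = (N + r * M) + 1 + M := by ring
        rw [he1, pow_succ, mul_comm ((1 - ε) ^ r) _]
        refine le_trans (hC2 (N + r * M) (by omega)) ?_
        apply mul_le_mul_right
        rw [show N + r * M + 1 = N + 1 + r * M from by omega]
        exact ih
  -- conclusion
  have hlim := ENNReal.tendsto_pow_atTop_nhds_zero_of_lt_one
    (ENNReal.sub_lt_self (a := (1:ENNReal)) (b := ε) ENNReal.one_ne_top one_ne_zero hε0)
  refine le_antisymm (ge_of_tendsto' hlim ?_) (zero_le)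
  intro r
  refine le_trans (hC1 (N + r * M)) ?_
  rw [show N + r * M + 1 = N + 1 + r * M from by omega]
  exact hiter r
end Avoid

section Null
variable [Fintype S] [MeasurableSpace S] (L : LTS S AP) (μ : Measure (ℕ → S))

lemma notRun_null (hμ : IsFairMeasure L μ) : μ {ρ : ℕ → S | ¬ IsRun L ρ} = 0 := by
  classical
  have hsub : {ρ : ℕ → S | ¬ IsRun L ρ} ⊆ ⋃ (i : ℕ), ⋃ (x : Fin (i + 2) → S),
      {ρ : ℕ → S | ¬ L.T (x ⟨i, by omega⟩) (x ⟨i + 1, by omega⟩) ∧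
        ∀ j : Fin (i + 2), ρ j = x j} := by
    intro ρ hρ
    rw [Set.mem_setOf_eq, IsRun] at hρ
    push_neg at hρ
    obtain ⟨i, hi⟩ := hρ
    exact Set.mem_iUnion.2 ⟨i, Set.mem_iUnion.2 ⟨fun j => ρ j, by simpa using hi, fun j => rfl⟩⟩
  refine le_antisymm (le_trans (measure_mono hsub) (le_of_eq ?_)) (zero_le)
  refine measure_iUnion_null fun i => measure_iUnion_null fun x => ?_
  by_cases hT : L.T (x ⟨i, by omega⟩) (x ⟨i + 1, by omega⟩)
  · convert measure_empty (μ := μ)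
    ext ρ
    simp [hT]
  · have hsub2 : {ρ : ℕ → S | ¬ L.T (x ⟨i, by omega⟩) (x ⟨i + 1, by omega⟩) ∧
        ∀ j : Fin (i + 2), ρ j = x j} ⊆ Cyl (List.ofFn x) := by
      intro ρ hρ
      rw [Cyl_ofFn]
      exact hρ.2
    have hz : μ (Cyl (List.ofFn x)) = 0 := by
      rw [hμ.2 (List.ofFn x) (by intro hnil; simpa using congrArg List.length hnil)]
      rw [pathProb, chainProb_ofFn L (i + 1) x]
      have : stepProb L (x (⟨i, by omega⟩ : Fin (i + 1)).castSucc)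
          (x (⟨i, by omega⟩ : Fin (i + 1)).succ) = 0 := by
        have e1 : (⟨i, by omega⟩ : Fin (i + 1)).castSucc = (⟨i, by omega⟩ : Fin (i + 2)) := rfl
        have e2 : (⟨i, by omega⟩ : Fin (i + 1)).succ = (⟨i + 1, by omega⟩ : Fin (i + 2)) := rfl
        rw [e1, e2, stepProb, if_neg hT]
      rw [Finset.prod_eq_zero (Finset.mem_univ (⟨i, by omega⟩ : Fin (i + 1))) this, mul_zero]
    exact le_antisymm (le_trans (measure_mono hsub2) (le_of_eq hz)) (zero_le)

lemma gen_null (hμ : IsFairMeasure L μ) (hsc : ∀ s t : S, Reachable L s t) :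
    μ {ρ : ℕ → S | ¬ Gen L ρ} = 0 := by
  classical
  set B : Set (ℕ → S) := ⋃ (n : ℕ), ⋃ (x : Fin (n + 1) → S), ⋃ (N : ℕ),
    {ρ : ℕ → S | (∀ i < n, L.T (x ⟨min i n, by omega⟩) (x ⟨min (i + 1) n, by omega⟩)) ∧
      ∀ p, N ≤ p → ∃ t ≤ n, ρ (p + t) ≠ x ⟨min t n, by omega⟩} with hB
  have hBnull : μ B = 0 := by
    refine measure_iUnion_null fun n => measure_iUnion_null fun x =>
      measure_iUnion_null fun N => ?_
    by_cases hpath : ∀ i < n, L.T (x ⟨min i n, by omega⟩) (x ⟨min (i + 1) n, by omega⟩)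
    · refine le_antisymm (le_trans (measure_mono ?_)
        (le_of_eq (avoid_null L μ (fun i => x ⟨min i n, by omega⟩) n N hμ hsc ?_))) (zero_le)
      · exact fun ρ hρ => hρ.2
      · intro i hi
        exact hpath i hi
    · convert measure_empty (μ := μ)
      ext ρ
      simp only [Set.mem_setOf_eq, Set.mem_empty_iff_false, iff_false]
      intro h
      exact hpath h.1
  have hsub : {ρ : ℕ → S | ¬ Gen L ρ} ⊆ {ρ : ℕ → S | ¬ IsRun L ρ} ∪ B := by
    intro ρ hρ
    by_cases hrun : IsRun L ρ
    · right
      rw [Set.mem_setOf_eq, Gen] at hρ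
      push_neg at hρ
      obtain ⟨σ, hσrun, n, N, h⟩ := hρ hrun
      refine Set.mem_iUnion.2 ⟨n, Set.mem_iUnion.2 ⟨fun i => σ i, Set.mem_iUnion.2 ⟨N, ?_, ?_⟩⟩⟩
      · intro i hi
        have e1 : min i n = i := by omega
        have e2 : min (i + 1) n = i + 1 := by omega
        simp only [e1, e2]
        exact hσrun i
      · intro p hp
        obtain ⟨t, ht, hne⟩ := h p hp
        refine ⟨t, ht, ?_⟩
        have e : min t n = t := by omega
        simp only [e]
        exact hne
    · exact Or.inl hrun
  refine le_antisymm (le_trans (measure_mono hsub) ?_) (zero_le)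
  refine le_trans (measure_union_le _ _) ?_
  rw [notRun_null L μ hμ, hBnull, add_zero]

end Null

/-- **zero-one law for strongly connected systems.** For a strongly
connected LTS `L`, `φ ∈ L⁺(F_p^∞)` and `μ` the fair-coin measure of `L`: either
there is `k` with `μ {ρ : (ρ,k) ⊨ φ} = 1`, or `μ {ρ : (ρ,k) ⊨ φ} = 0` for every `k`. -/
theorem zero_one_law [Fintype S] [MeasurableSpace S] [DiscreteMeasurableSpace S]
    (L : LTS S AP) (hsc : ∀ s t : S, Reachable L s t)
    (φ : PM AP) (hφ : Positive φ) (μ : Measure (ℕ → S)) (hμ : IsFairMeasure L μ) :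
    (∃ k : ℕ, μ {ρ : ℕ → S | Sat L φ ρ k} = 1) ∨
    (∀ k : ℕ, μ {ρ : ℕ → S | Sat L φ ρ k} = 0) := by
  classical
  have hGnull : μ {ρ : ℕ → S | ¬ Gen L ρ} = 0 := gen_null L μ hμ hsc
  have hG1 : (1 : ENNReal) ≤ μ {ρ : ℕ → S | Gen L ρ} := by
    haveI := hμ.1
    have hcover : (Set.univ : Set (ℕ → S)) ⊆ {ρ | Gen L ρ} ∪ {ρ | ¬ Gen L ρ} := by
      intro ρ _
      by_cases h : Gen L ρ
      · exact Or.inl h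
      · exact Or.inr h
    calc (1 : ENNReal) = μ Set.univ := measure_univ.symm
      _ ≤ μ ({ρ | Gen L ρ} ∪ {ρ | ¬ Gen L ρ}) := measure_mono hcover
      _ ≤ μ {ρ | Gen L ρ} + μ {ρ : ℕ → S | ¬ Gen L ρ} := measure_union_le _ _
      _ = μ {ρ | Gen L ρ} := by rw [hGnull, add_zero]
  by_cases h : ∃ k : ℕ, ∃ ρ₀ : ℕ → S, Gen L ρ₀ ∧ Sat L φ ρ₀ k
  · obtain ⟨k, ρ₀, hρ₀, hsat⟩ := h
    left
    refine ⟨k, le_antisymm ?_ ?_⟩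
    · haveI := hμ.1
      exact le_trans (measure_mono (Set.subset_univ _)) (le_of_eq measure_univ)
    · refine le_trans hG1 (measure_mono ?_)
      intro σ hσ
      exact sat_pos hφ ρ₀ σ hρ₀ hσ hsat
  · push_neg at h
    right
    intro k
    refine le_antisymm (le_trans (measure_mono ?_) (le_of_eq hGnull)) (zero_le)
    intro ρ hρ hgen
    exact h k ρ hgen hρ
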